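/- Let x, y be integers with x ≥ 1, x + y√2 > 0, and x - y√2 > 0, and let a, b be positive reals with a ≥ 2b and a > b√2. Then 4ax + 8by ≥ 4a. -/
import Mathlib

theorem core_inequality_p7mod16
    (x y : ℤ) (hx : 1 ≤ x)
    (hxy1 : 0 < (x : ℝ) + y * Real.sqrt 2)
    (hxy2 : 0 < (x : ℝ) - y * Real.sqrt 2)
    (a b : ℝ) (ha : 0 < a) (hb : 0 < b)
    (hab : 2 * b ≤ a) (hab2 : b * Real.sqrt 2 < a) :
    4 * a ≤ 4 * a * x + 8 * b * y := by
  rcases le_or_gt 0 y with hy | hy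
  · have h1 : (1:ℝ) ≤ x := by exact_mod_cast hx
    have h2 : (0:ℝ) ≤ y := by exact_mod_cast hy
    nlinarith
  · have hyR : (y:ℝ) < 0 := by exact_mod_cast hy
    have hs : 1 < Real.sqrt 2 := by
      nlinarith [Real.sq_sqrt (by norm_num : (0:ℝ) ≤ 2), Real.sqrt_nonneg 2]
    have h1 : (-y:ℝ) < x := by nlinarith
    have hZ : -y < x := by exact_mod_cast h1
    have h2 : ((-y:ℤ):ℝ) + 1 ≤ x := by exact_mod_cast hZ
    push_cast at h2
    nlinarith [mul_le_mul_of_nonneg_left hab (neg_nonneg.mpr hyR.le)]
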